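/- Let Φ ∈ ℝ^{M×N} with ‖ΦᵀΦ‖ ≤ L (operator norm), let φ: ℝᴺ → ℝ be convex, λ > 0, and F(x) = (1/2)‖Φx − y‖²₂ + λφ(x). For step size ρ = 1/L, the ISTA iterates x^{(k)} = prox_{ρλφ}(x^{(k−1)} − ρΦᵀ(Φx^{(k−1)} − y)) satisfy F(x^{(k)}) ≤ F(x^{(k−1)}) for every k ≥ 1. -/

import Mathlib

open Finset Matrix RealInnerProductSpace

lemma esq {n : ℕ} (v : EuclideanSpace ℝ (Fin n)) : ‖v‖ ^ 2 = ∑ i, v i ^ 2 := by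
  rw [EuclideanSpace.norm_eq, Real.sq_sqrt (by positivity)]
  simp [sq_abs]

lemma einner {n : ℕ} (u v : EuclideanSpace ℝ (Fin n)) :
    (inner ℝ (u) (v) : ℝ) = ∑ i, u i * v i := by
  simp [PiLp.inner_apply, RCLike.inner_apply, mul_comm]

/-- **Descent property of ISTA.** If `‖ΦᵀΦ‖ ≤ L` (operator norm), `φ` is convex, and
the iterates follow `x⁽ᵏ⁾ = prox_{ρλφ}(x⁽ᵏ⁻¹⁾ − ρΦᵀ(Φx⁽ᵏ⁻¹⁾ − y))` with step size
`ρ = 1/L`, then `F(x⁽ᵏ⁾) ≤ F(x⁽ᵏ⁻¹⁾)` for all `k ≥ 1`, where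
`F(x) = (1/2)‖Φx − y‖₂² + λφ(x)`. -/
theorem ista_descent
    (M N : ℕ) (Φ : Matrix (Fin M) (Fin N) ℝ) (y : Fin M → ℝ)
    (L : ℝ) (hL : 0 < L)
    (hΦ : ∀ v : EuclideanSpace ℝ (Fin N),
      ‖(show EuclideanSpace ℝ (Fin N) from WithLp.toLp 2 ((Φᵀ * Φ).mulVec v))‖ ≤ L * ‖v‖)
    (lam : ℝ) (hlam : 0 < lam)
    (φ : EuclideanSpace ℝ (Fin N) → ℝ) (hφ : ConvexOn ℝ Set.univ φ)
    (ρ : ℝ) (hρ : ρ = 1 / L)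
    (F : EuclideanSpace ℝ (Fin N) → ℝ)
    (hF : F = fun (x : EuclideanSpace ℝ (Fin N)) => (1 / 2) * ∑ i, (Φ.mulVec x i - y i) ^ 2 + lam * φ x)
    (p : EuclideanSpace ℝ (Fin N) → EuclideanSpace ℝ (Fin N))
    (hp : ∀ r u, (1 / 2) * ‖p r - r‖ ^ 2 + ρ * lam * φ (p r)
        ≤ (1 / 2) * ‖u - r‖ ^ 2 + ρ * lam * φ u)
    (x : ℕ → EuclideanSpace ℝ (Fin N))
    (hx : ∀ k : ℕ, x (k + 1)
        = p (x k - ρ • (show EuclideanSpace ℝ (Fin N) from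
            WithLp.toLp 2 (Φᵀ.mulVec (Φ.mulVec (x k) - y))))) :
    ∀ k : ℕ, F (x (k + 1)) ≤ F (x k) := by
  intro k
  have hρ0 : 0 < ρ := by rw [hρ]; positivity
  have hρL : ρ * L = 1 := by rw [hρ]; field_simp
  set a : EuclideanSpace ℝ (Fin N) := x k with ha
  set g : EuclideanSpace ℝ (Fin N) := WithLp.toLp 2 (Φᵀ.mulVec (Φ.mulVec a - y)) with hg
  set r : EuclideanSpace ℝ (Fin N) := a - ρ • g with hr
  set z : EuclideanSpace ℝ (Fin N) := x (k + 1) with hz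
  have hzp : z = p r := hx k
  set w : EuclideanSpace ℝ (Fin N) := z - a with hw
  -- prox inequality
  have hprox := hp r a
  rw [← hzp] at hprox
  have hzr : z - r = w + ρ • g := by rw [hr, hw]; abel
  have har : a - r = ρ • g := by rw [hr]; abel
  rw [hzr, har] at hprox
  have hn1 : ‖w + ρ • g‖ ^ 2 = ‖w‖ ^ 2 + 2 * (ρ * (inner ℝ (w) (g) : ℝ)) + ρ ^ 2 * ‖g‖ ^ 2 := by
    rw [norm_add_sq_real, real_inner_smul_right, norm_smul, Real.norm_eq_abs, mul_pow, sq_abs]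
  have hn2 : ‖ρ • g‖ ^ 2 = ρ ^ 2 * ‖g‖ ^ 2 := by
    rw [norm_smul, Real.norm_eq_abs, mul_pow, sq_abs]
  rw [hn1, hn2] at hprox
  -- key inequality from prox
  have key1 : (inner ℝ (g) (w) : ℝ) ≤ lam * (φ a - φ z) - (L / 2) * ‖w‖ ^ 2 := by
    have h1 : ρ * (inner ℝ (w) (g) : ℝ) + (1 / 2) * ‖w‖ ^ 2 ≤ ρ * lam * (φ a - φ z) := by nlinarith [hprox]
    have h2 := mul_le_mul_of_nonneg_left h1 hL.le
    have hc : (inner ℝ g w : ℝ) = inner ℝ w g := real_inner_comm w g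
    nlinarith [h2, hρL, hc]
  -- quadratic expansion of the smooth part
  have hzaw : z = a + w := by rw [hw]; abel
  have hmw : ∀ i, Φ.mulVec z i = Φ.mulVec a i + Φ.mulVec w i := by
    intro i
    rw [hzaw, WithLp.ofLp_add, show Φ.mulVec (a + w) = Φ.mulVec a + Φ.mulVec w from Matrix.mulVec_add Φ a w]
    rfl
  have cross : ∑ i, (Φ.mulVec a i - y i) * Φ.mulVec w i = (inner ℝ (g) (w) : ℝ) := by
    have : ∑ i, (Φ.mulVec a i - y i) * Φ.mulVec w i
        = (Φ.mulVec a - y) ⬝ᵥ Φ.mulVec w := rfl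
    rw [this, Matrix.dotProduct_mulVec, ← Matrix.mulVec_transpose, einner]
    rfl
  have quad : ∑ i, (Φ.mulVec w i) ^ 2 ≤ L * ‖w‖ ^ 2 := by
    have e1 : ∑ i, (Φ.mulVec w i) ^ 2 = Φ.mulVec w ⬝ᵥ Φ.mulVec w := by
      simp [dotProduct, sq]
    have e2 : Φ.mulVec w ⬝ᵥ Φ.mulVec w
        = (inner ℝ ((show EuclideanSpace ℝ (Fin N) from WithLp.toLp 2 ((Φᵀ * Φ).mulVec w))) (w) : ℝ) := by
      rw [Matrix.dotProduct_mulVec, ← Matrix.mulVec_transpose, ← Matrix.mulVec_mulVec, einner]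
      rfl
    rw [e1, e2]
    calc (inner ℝ ((show EuclideanSpace ℝ (Fin N) from WithLp.toLp 2 ((Φᵀ * Φ).mulVec w))) (w) : ℝ)
        ≤ ‖(show EuclideanSpace ℝ (Fin N) from WithLp.toLp 2 ((Φᵀ * Φ).mulVec w))‖ * ‖w‖ :=
          real_inner_le_norm _ _
      _ ≤ (L * ‖w‖) * ‖w‖ := by
          apply mul_le_mul_of_nonneg_right (hΦ w) (norm_nonneg _)
      _ = L * ‖w‖ ^ 2 := by ring
  have key2 : ∑ i, (Φ.mulVec z i - y i) ^ 2
      ≤ ∑ i, (Φ.mulVec a i - y i) ^ 2 + 2 * (inner ℝ (g) (w) : ℝ) + L * ‖w‖ ^ 2 := by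
    have expand : ∑ i, (Φ.mulVec z i - y i) ^ 2
        = ∑ i, (Φ.mulVec a i - y i) ^ 2
          + 2 * (∑ i, (Φ.mulVec a i - y i) * Φ.mulVec w i)
          + ∑ i, (Φ.mulVec w i) ^ 2 := by
      rw [Finset.mul_sum, ← Finset.sum_add_distrib, ← Finset.sum_add_distrib]
      apply Finset.sum_congr rfl
      intro i _
      rw [hmw i]; ring
    rw [expand, cross]
    linarith [quad]
  rw [hF]
  simp only
  linarith [key1, key2]
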